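/- arXiv:2312.01227 — 2 statements merged into one kernel-verified Lean document; each statement's English description precedes it below -/
import Mathlib

section
/- Let p_t be a probability density function on ℝ^d with p_t > 0 almost everywhere, let G : ℝ^d → ℝ be measurable with |G| ≤ L almost everywhere, let α_t > 0, and define p_{t+1} = exp(−α_t G) p_t / ∫ exp(−α_t G) p_t. Then for every probability density function p on ℝ^d with KL[p, p_t] < ∞, KL[p, p_{t+1}] − KL[p, p_t] ≤ α_t ∫ G (p − p_t) + 2 α_t² L². -/
open MeasureTheory

noncomputable section

/-- A probability density function on a measure space: nonnegative, integrable,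
integrating to one. -/
def IsPdf {X : Type*} [MeasureSpace X] (p : X → ℝ) : Prop :=
  Integrable p ∧ (∀ x, 0 ≤ p x) ∧ ∫ x, p x = 1

/-- Kullback–Leibler divergence `KL[p, g] = ∫ p log (p/g)`. -/
def KL {X : Type*} [MeasureSpace X] (p g : X → ℝ) : ℝ :=
  ∫ x, p x * Real.log (p x / g x)

lemma exp_quad_aux {x : ℝ} (hx : |x| ≤ 1) : Real.exp x ≤ 1 + x + x ^ 2 := by
  have h := Real.exp_bound hx (n := 2) (by norm_num)
  simp [Finset.sum_range_succ] at h
  have := abs_le.mp h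
  nlinarith [sq_abs x, sq_nonneg x]

/-- One-step divergence decrease bound for the mirror descent update
`p_{t+1} ∝ exp(−α_t G) p_t`:
`KL[p, p_{t+1}] − KL[p, p_t] ≤ α_t ∫ G (p − p_t) + 2 α_t² L²`. -/
theorem smd_step_kl_bound {d : ℕ} (pt G : (Fin d → ℝ) → ℝ) (αt L : ℝ)
    (hpt : IsPdf pt) (hpt_pos : ∀ᵐ x ∂(volume), 0 < pt x)
    (hG : Measurable G) (hGb : ∀ᵐ x ∂(volume), |G x| ≤ L) (hα : 0 < αt) :
    ∀ p : (Fin d → ℝ) → ℝ, IsPdf p →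
      Integrable (fun x => p x * Real.log (p x / pt x)) →
      KL p (fun x => Real.exp (-αt * G x) * pt x /
            ∫ y, Real.exp (-αt * G y) * pt y) - KL p pt ≤
        αt * (∫ x, G x * (p x - pt x)) + 2 * αt ^ 2 * L ^ 2 := by
  intro p hp hint
  obtain ⟨hpt_int, hpt_nn, hpt_one⟩ := hpt
  obtain ⟨hp_int, hp_nn, hp_one⟩ := hp
  set Z : ℝ := ∫ y, Real.exp (-αt * G y) * pt y with hZdef
  have hGae : AEStronglyMeasurable G volume := hG.aestronglyMeasurable
  have hexpm : AEStronglyMeasurable (fun x => Real.exp (-αt * G x)) volume :=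
    (Real.measurable_exp.comp (hG.const_mul (-αt))).aestronglyMeasurable
  -- L ≥ 0
  haveI : (Filter.NeBot (ae (volume : Measure (Fin d → ℝ)))) := by
    refine ae_neBot.mpr ?_
    intro h
    have := IsOpen.measure_pos (volume : Measure (Fin d → ℝ)) isOpen_univ
      Set.univ_nonempty
    simp [h] at this
  have hL0 : 0 ≤ L := by
    obtain ⟨x, hx⟩ := hGb.exists
    exact le_trans (abs_nonneg _) hx
  -- integrability of e^{-αG}·pt
  have hf_int : Integrable (fun x => Real.exp (-αt * G x) * pt x) := by
    refine Integrable.mono' (hpt_int.const_mul (Real.exp (αt * L)))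
      (hexpm.mul hpt_int.aestronglyMeasurable) ?_
    filter_upwards [hGb, hpt_pos] with x hx hptx
    rw [norm_mul, Real.norm_eq_abs, Real.norm_eq_abs,
      abs_of_pos (Real.exp_pos _), abs_of_pos hptx]
    have h1 : -αt * G x ≤ αt * L := by
      have := neg_abs_le (G x)
      nlinarith [abs_le.mp hx]
    exact mul_le_mul_of_nonneg_right (Real.exp_le_exp.mpr h1) hptx.le
  -- Z > 0
  have hZpos : 0 < Z := by
    have hlow : Integrable (fun x => Real.exp (-(αt * L)) * pt x) :=
      hpt_int.const_mul _
    have hle : (fun x => Real.exp (-(αt * L)) * pt x) ≤ᵐ[volume]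
        (fun x => Real.exp (-αt * G x) * pt x) := by
      filter_upwards [hGb, hpt_pos] with x hx hptx
      have : -(αt * L) ≤ -αt * G x := by nlinarith [abs_le.mp hx]
      exact mul_le_mul_of_nonneg_right (Real.exp_le_exp.mpr this) hptx.le
    have := integral_mono_ae hlow hf_int hle
    rw [integral_const_mul, hpt_one, mul_one] at this
    exact lt_of_lt_of_le (Real.exp_pos _) this
  -- integrability of G·p and G·pt
  have hGp_int : Integrable (fun x => G x * p x) := by
    refine Integrable.mono' (hp_int.const_mul L)
      (hGae.mul hp_int.aestronglyMeasurable) ?_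
    filter_upwards [hGb] with x hx
    rw [norm_mul, Real.norm_eq_abs, Real.norm_eq_abs, abs_of_nonneg (hp_nn x)]
    exact mul_le_mul_of_nonneg_right hx (hp_nn x)
  have hGpt_int : Integrable (fun x => G x * pt x) := by
    refine Integrable.mono' (hpt_int.const_mul L)
      (hGae.mul hpt_int.aestronglyMeasurable) ?_
    filter_upwards [hGb, hpt_pos] with x hx hptx
    rw [norm_mul, Real.norm_eq_abs, Real.norm_eq_abs, abs_of_pos hptx]
    exact mul_le_mul_of_nonneg_right hx hptx.le
  -- key identity
  have key : KL p (fun x => Real.exp (-αt * G x) * pt x / Z)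
      = (∫ x, p x * Real.log (p x / pt x)) + αt * (∫ x, G x * p x)
        + Real.log Z := by
    unfold KL
    have heq : (fun x => p x * Real.log (p x / (Real.exp (-αt * G x) * pt x / Z)))
        =ᵐ[volume] (fun x => p x * Real.log (p x / pt x)
          + αt * (G x * p x) + Real.log Z * p x) := by
      filter_upwards [hpt_pos] with x hptx
      rcases eq_or_lt_of_le (hp_nn x) with h | h
      · simp [← h]
      · have hE : Real.exp (-αt * G x) ≠ 0 := Real.exp_ne_zero _
        have hrw : p x / (Real.exp (-αt * G x) * pt x / Z)
            = (p x / pt x) * Real.exp (αt * G x) * Z := by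
          rw [neg_mul, Real.exp_neg]
          field_simp
        rw [hrw, Real.log_mul (by positivity) hZpos.ne',
          Real.log_mul (by positivity) (Real.exp_ne_zero _), Real.log_exp]
        ring
    rw [integral_congr_ae heq]
    have h1 : ∫ x, (p x * Real.log (p x / pt x) + αt * (G x * p x)
          + Real.log Z * p x)
        = (∫ x, (p x * Real.log (p x / pt x) + αt * (G x * p x)))
          + ∫ x, Real.log Z * p x :=
      integral_add (hint.add (hGp_int.const_mul αt)) (hp_int.const_mul _)
    have h2 : ∫ x, (p x * Real.log (p x / pt x) + αt * (G x * p x))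
        = (∫ x, p x * Real.log (p x / pt x)) + ∫ x, αt * (G x * p x) :=
      integral_add hint (hGp_int.const_mul αt)
    rw [h1, h2, integral_const_mul, integral_const_mul, hp_one, mul_one]
  -- Hoeffding-type bound : log Z ≤ -αt * ∫ G pt + 2 αt² L²
  have hoef : Real.log Z ≤ -(αt * ∫ x, G x * pt x) + 2 * αt ^ 2 * L ^ 2 := by
    rcases le_or_gt (αt * L) 1 with hc | hc
    · -- small step: Z ≤ 1 - αt m + αt² L²
      have hub : Integrable (fun x => (1 - αt * G x + αt ^ 2 * L ^ 2) * pt x) := by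
        have : (fun x => (1 - αt * G x + αt ^ 2 * L ^ 2) * pt x)
            = fun x => (1 + αt ^ 2 * L ^ 2) * pt x - αt * (G x * pt x) := by
          funext x; ring
        rw [this]
        exact (hpt_int.const_mul _).sub (hGpt_int.const_mul _)
      have hZle : Z ≤ 1 - αt * (∫ x, G x * pt x) + αt ^ 2 * L ^ 2 := by
        have hmono : (fun x => Real.exp (-αt * G x) * pt x) ≤ᵐ[volume]
            (fun x => (1 - αt * G x + αt ^ 2 * L ^ 2) * pt x) := by
          filter_upwards [hGb, hpt_pos] with x hx hptx
          have habs : |(-αt) * G x| ≤ 1 := by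
            rw [abs_mul, abs_neg, abs_of_pos hα]
            exact le_trans (mul_le_mul_of_nonneg_left hx hα.le) hc
          have h1 : Real.exp (-αt * G x) ≤ 1 + (-αt * G x) + (-αt * G x) ^ 2 :=
            exp_quad_aux habs
          have h2 : (-αt * G x) ^ 2 ≤ αt ^ 2 * L ^ 2 := by
            have hab := abs_le.mp hx
            have hG2 : G x ^ 2 ≤ L ^ 2 := sq_le_sq' hab.1 hab.2
            calc (-αt * G x) ^ 2 = αt ^ 2 * G x ^ 2 := by ring
              _ ≤ αt ^ 2 * L ^ 2 :=
                mul_le_mul_of_nonneg_left hG2 (sq_nonneg αt)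
          have : Real.exp (-αt * G x) ≤ 1 - αt * G x + αt ^ 2 * L ^ 2 := by
            nlinarith
          exact mul_le_mul_of_nonneg_right this hptx.le
        have := integral_mono_ae hf_int hub hmono
        calc Z ≤ ∫ x, (1 - αt * G x + αt ^ 2 * L ^ 2) * pt x := this
          _ = 1 - αt * (∫ x, G x * pt x) + αt ^ 2 * L ^ 2 := by
            have : (fun x => (1 - αt * G x + αt ^ 2 * L ^ 2) * pt x)
                = fun x => (1 + αt ^ 2 * L ^ 2) * pt x - αt * (G x * pt x) := by
              funext x; ring
            rw [this, integral_sub (hpt_int.const_mul _) (hGpt_int.const_mul _),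
              integral_const_mul, integral_const_mul, hpt_one]
            ring
      have hlog : Real.log Z ≤ Z - 1 := Real.log_le_sub_one_of_pos hZpos
      nlinarith [sq_nonneg (αt * L), sq_nonneg αt, sq_nonneg L]
    · -- large step: log Z ≤ αt L and αt m ≤ αt L, and 2 αt L ≤ 2 αt² L²
      have hZle : Z ≤ Real.exp (αt * L) := by
        have hmono : (fun x => Real.exp (-αt * G x) * pt x) ≤ᵐ[volume]
            (fun x => Real.exp (αt * L) * pt x) := by
          filter_upwards [hGb, hpt_pos] with x hx hptx
          have : -αt * G x ≤ αt * L := by nlinarith [abs_le.mp hx]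
          exact mul_le_mul_of_nonneg_right (Real.exp_le_exp.mpr this) hptx.le
        have := integral_mono_ae hf_int (hpt_int.const_mul _) hmono
        rwa [integral_const_mul, hpt_one, mul_one] at this
      have hlogZ : Real.log Z ≤ αt * L :=
        (Real.log_le_iff_le_exp hZpos).mpr hZle
      have hm : (∫ x, G x * pt x) ≤ L := by
        have hmono : (fun x => G x * pt x) ≤ᵐ[volume]
            (fun x => L * pt x) := by
          filter_upwards [hGb, hpt_pos] with x hx hptx
          exact mul_le_mul_of_nonneg_right (le_of_abs_le hx) hptx.le
        have := integral_mono_ae hGpt_int (hpt_int.const_mul _) hmono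
        rwa [integral_const_mul, hpt_one, mul_one] at this
      have h1 : 0 ≤ αt * (L - ∫ x, G x * pt x) :=
        mul_nonneg hα.le (by linarith)
      have h2 : 0 < (αt * L) * (αt * L - 1) :=
        mul_pos (by linarith) (by linarith)
      nlinarith [h1, h2]
  -- finish
  have hsub : (∫ x, G x * (p x - pt x))
      = (∫ x, G x * p x) - ∫ x, G x * pt x := by
    have : (fun x => G x * (p x - pt x))
        = fun x => G x * p x - G x * pt x := by funext x; ring
    rw [this, integral_sub hGp_int hGpt_int]
  have hKLpt : KL p pt = ∫ x, p x * Real.log (p x / pt x) := rfl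
  rw [key, hKLpt, hsub]
  nlinarith
end
end

section
/- Let v be a probability density function on ℝ^d with v > 0 almost everywhere, let q : ℝ^d → (0,∞) be measurable with |log q| ≤ L, let α > 0, and define p' = q^α v / ∫ q^α v. Then ‖v − p'‖_TV ≤ αL/2, and moreover KL[p', v] ≤ KL[p', v] + KL[v, p'] ≤ 2αL ‖v − p'‖_TV ≤ α²L². -/
open MeasureTheory

noncomputable section

/-- Total variation distance between two densities: `(1/2) ∫ |p - g|`. -/
def TV {X : Type*} [MeasureSpace X] (p g : X → ℝ) : ℝ :=
  (1 / 2) * ∫ x, |p x - g x|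

private lemma exp_mul_one_sub_le (u : ℝ) : Real.exp u * (1 - u) ≤ 1 := by
  have h : 1 - u ≤ Real.exp (-u) := by linarith [Real.add_one_le_exp (-u)]
  calc Real.exp u * (1 - u) ≤ Real.exp u * Real.exp (-u) :=
        mul_le_mul_of_nonneg_left h (Real.exp_pos u).le
    _ = 1 := by rw [← Real.exp_add]; simp

private lemma two_mul_exp_sub_le (t : ℝ) (ht : 0 ≤ t) :
    2 * (Real.exp t - 1) ≤ t * (Real.exp t + 1) := by
  set f : ℝ → ℝ := fun s => s * (Real.exp s + 1) - 2 * (Real.exp s - 1) with hf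
  have hderiv : ∀ s, HasDerivAt f (1 - Real.exp s * (1 - s)) s := by
    intro s
    have h1 : HasDerivAt (fun s : ℝ => s * (Real.exp s + 1))
        (1 * (Real.exp s + 1) + s * Real.exp s) s :=
      (hasDerivAt_id s).mul ((Real.hasDerivAt_exp s).add_const 1)
    have h2 : HasDerivAt (fun s : ℝ => 2 * (Real.exp s - 1)) (2 * Real.exp s) s :=
      ((Real.hasDerivAt_exp s).sub_const 1).const_mul 2
    have h3 : HasDerivAt f (1 * (Real.exp s + 1) + s * Real.exp s - 2 * Real.exp s) s :=
      h1.sub h2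
    convert h3 using 1
    ring
  have hmono : Monotone f :=
    monotone_of_deriv_nonneg (fun s => (hderiv s).differentiableAt)
      (fun s => by rw [(hderiv s).deriv]; linarith [exp_mul_one_sub_le s])
  have h0 : f 0 ≤ f t := hmono ht
  have hf0 : f 0 = 0 := by simp [hf]
  have hft : f t = t * (Real.exp t + 1) - 2 * (Real.exp t - 1) := rfl
  linarith

private lemma prod_one_sub_exp_le (m m' : ℝ) (hm : 0 ≤ m) (hm' : 0 ≤ m') :
    (1 - Real.exp (-m)) * (1 - Real.exp (-m')) ≤
      (1 - Real.exp (-(m + m'))) * (m + m') / 4 := by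
  set a := Real.exp (-(m / 2)) with ha
  set b := Real.exp (-(m' / 2)) with hb
  set t := (m + m') / 2 with htdef
  have ht : 0 ≤ t := by positivity
  have e1 : Real.exp (-m) = a * a := by rw [ha, ← Real.exp_add]; ring_nf
  have e2 : Real.exp (-m') = b * b := by rw [hb, ← Real.exp_add]; ring_nf
  have e3 : Real.exp (-(m + m')) = (a * b) * (a * b) := by
    rw [ha, hb, ← Real.exp_add, ← Real.exp_add]; congr 1; ring
  have hzpos : 0 < a * b := by positivity
  have hz1 : Real.exp t * (a * b) = 1 := by
    rw [ha, hb, ← Real.exp_add, ← Real.exp_add, htdef, show (m+m')/2 + (-(m/2) + -(m'/2)) = 0 from by ring]; exact Real.exp_zero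
  have hkey := two_mul_exp_sub_le t ht
  have h2 : 2 * (1 - a * b) ≤ t * (1 + a * b) := by
    have := mul_le_mul_of_nonneg_right hkey hzpos.le
    nlinarith [this, hz1]
  have hab1 : a * b ≤ 1 := by nlinarith [Real.exp_pos t, hz1, Real.one_le_exp ht]
  have h3 : (1 - a * b) * (2 * (1 - a * b)) ≤ (1 - a * b) * (t * (1 + a * b)) :=
    mul_le_mul_of_nonneg_left h2 (by linarith)
  rw [e1, e2, e3]
  have hmm : m + m' = 2 * t := by rw [htdef]; ring
  rw [hmm]
  nlinarith [sq_nonneg (a - b), h3]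

set_option maxHeartbeats 1000000 in
/-- Displacement bound for one Bayesian likelihood update `p' ∝ q^α v`:
`‖v − p'‖_TV ≤ αL/2` and
`KL[p', v] ≤ KL[p', v] + KL[v, p'] ≤ 2αL‖v − p'‖_TV ≤ α²L²`. -/
theorem likelihood_update_displacement {d : ℕ}
    (v q : (Fin d → ℝ) → ℝ) (α L : ℝ)
    (hv : IsPdf v) (hv_pos : ∀ᵐ x ∂(volume), 0 < v x)
    (hq_meas : Measurable q) (hq_pos : ∀ x, 0 < q x)
    (hq_bdd : ∀ x, |Real.log (q x)| ≤ L) (hα : 0 < α) :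
    TV v (fun x => q x ^ α * v x / ∫ y, q y ^ α * v y) ≤ α * L / 2 ∧
    KL (fun x => q x ^ α * v x / ∫ y, q y ^ α * v y) v ≤
      KL (fun x => q x ^ α * v x / ∫ y, q y ^ α * v y) v +
        KL v (fun x => q x ^ α * v x / ∫ y, q y ^ α * v y) ∧
    KL (fun x => q x ^ α * v x / ∫ y, q y ^ α * v y) v +
        KL v (fun x => q x ^ α * v x / ∫ y, q y ^ α * v y) ≤
      2 * α * L * TV v (fun x => q x ^ α * v x / ∫ y, q y ^ α * v y) ∧
    2 * α * L * TV v (fun x => q x ^ α * v x / ∫ y, q y ^ α * v y) ≤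
      α ^ 2 * L ^ 2 := by
  obtain ⟨hv_int, hv_nonneg, hv_one⟩ := hv
  set β : ℝ := α * L with hβ_def
  have hL : 0 ≤ L := le_trans (abs_nonneg _) (hq_bdd (fun _ => 0))
  have hβ : 0 ≤ β := mul_nonneg hα.le hL
  set h : (Fin d → ℝ) → ℝ := fun x => α * Real.log (q x) with hh_def
  have hh_meas : Measurable h := (hq_meas.log).const_mul α
  have hh_bdd : ∀ x, |h x| ≤ β := by
    intro x
    rw [hh_def]
    simp only
    rw [abs_mul, abs_of_pos hα]
    exact mul_le_mul_of_nonneg_left (hq_bdd x) hα.le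
  have hq_rpow : ∀ x, q x ^ α = Real.exp (h x) := by
    intro x
    rw [Real.rpow_def_of_pos (hq_pos x), hh_def]
    simp only
    rw [mul_comm]
  simp only [hq_rpow]
  set w : (Fin d → ℝ) → ℝ := fun x => Real.exp (h x) * v x with hw_def
  set Z : ℝ := ∫ y, w y with hZ_def
  set p' : (Fin d → ℝ) → ℝ := fun x => Real.exp (h x) * v x / Z with hp'_def
  have hp'w : ∀ x, p' x = w x / Z := fun _ => rfl
  have hw_nonneg : ∀ x, 0 ≤ w x := fun x => mul_nonneg (Real.exp_pos _).le (hv_nonneg x)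
  have hw_le : ∀ x, w x ≤ Real.exp β * v x := fun x =>
    mul_le_mul_of_nonneg_right (Real.exp_le_exp.2 (le_of_abs_le (hh_bdd x))) (hv_nonneg x)
  have hw_ge : ∀ x, Real.exp (-β) * v x ≤ w x := fun x =>
    mul_le_mul_of_nonneg_right (Real.exp_le_exp.2 (neg_le_of_abs_le (hh_bdd x))) (hv_nonneg x)
  have hw_int : Integrable w := by
    refine Integrable.mono (hv_int.const_mul (Real.exp β))
      ((Real.measurable_exp.comp hh_meas).aestronglyMeasurable.mul hv_int.1)
      (Filter.Eventually.of_forall fun x => ?_)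
    rw [Real.norm_eq_abs, Real.norm_eq_abs, abs_of_nonneg (hw_nonneg x),
      abs_of_nonneg (mul_nonneg (Real.exp_pos β).le (hv_nonneg x))]
    exact hw_le x
  have hZ_le : Z ≤ Real.exp β := by
    have h1 : Z ≤ ∫ x, Real.exp β * v x :=
      integral_mono hw_int (hv_int.const_mul _) hw_le
    rwa [integral_const_mul, hv_one, mul_one] at h1
  have hZ_ge : Real.exp (-β) ≤ Z := by
    have h1 : (∫ x, Real.exp (-β) * v x) ≤ Z :=
      integral_mono (hv_int.const_mul _) hw_int hw_ge
    rwa [integral_const_mul, hv_one, mul_one] at h1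
  have hZ_pos : 0 < Z := lt_of_lt_of_le (Real.exp_pos _) hZ_ge
  set c : ℝ := Real.log Z with hc_def
  have hexp_c : Real.exp c = Z := Real.exp_log hZ_pos
  have hc_le : c ≤ β := by
    rw [hc_def, ← Real.log_exp β]
    exact Real.log_le_log hZ_pos hZ_le
  have hc_ge : -β ≤ c := by
    rw [hc_def, ← Real.log_exp (-β)]
    exact Real.log_le_log (Real.exp_pos _) hZ_ge
  set g : (Fin d → ℝ) → ℝ := fun x => h x - c with hg_def
  have hg_meas : Measurable g := hh_meas.sub measurable_const
  have hp'_eq : ∀ x, p' x = v x * Real.exp (g x) := by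
    intro x
    rw [hp'_def, hg_def]
    simp only
    rw [← hexp_c, Real.exp_sub]
    ring
  set m : ℝ := β - c with hm_def
  set m' : ℝ := β + c with hm'_def
  have hm : 0 ≤ m := by rw [hm_def]; linarith
  have hm' : 0 ≤ m' := by rw [hm'_def]; linarith
  have hg_le : ∀ x, g x ≤ m := fun x => by
    rw [hg_def, hm_def]; simp only
    linarith [le_of_abs_le (hh_bdd x)]
  have hg_ge : ∀ x, -m' ≤ g x := fun x => by
    rw [hg_def, hm'_def]; simp only
    linarith [neg_le_of_abs_le (hh_bdd x)]
  have hp'_int : Integrable p' := hw_int.div_const Z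
  have hp'_nonneg : ∀ x, 0 ≤ p' x := fun x => div_nonneg (hw_nonneg x) hZ_pos.le
  have hp'_one : ∫ x, p' x = 1 := by
    rw [hp'_def]
    rw [integral_div]
    exact div_self hZ_pos.ne'
  set u : (Fin d → ℝ) → ℝ := fun x => p' x - v x with hu_def
  have hu_int : Integrable u := hp'_int.sub hv_int
  have hu_zero : ∫ x, u x = 0 := by
    rw [hu_def]
    rw [integral_sub hp'_int hv_int, hp'_one, hv_one, sub_self]
  have hu_eq : ∀ x, u x = v x * (Real.exp (g x) - 1) := by
    intro x
    rw [hu_def]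
    simp only
    rw [hp'_eq x]
    ring
  set A : Set (Fin d → ℝ) := {x | 0 < g x} with hA_def
  have hA : MeasurableSet A := measurableSet_lt measurable_const hg_meas
  set T : ℝ := ∫ x in A, u x with hT_def
  have hu_nonneg_A : ∀ x ∈ A, 0 ≤ u x := by
    intro x hx
    rw [hu_eq x]
    have : (1:ℝ) ≤ Real.exp (g x) := Real.one_le_exp (le_of_lt hx)
    nlinarith [hv_nonneg x]
  have hu_nonpos_Ac : ∀ x ∈ Aᶜ, u x ≤ 0 := by
    intro x hx
    rw [hu_eq x]
    have hgx : g x ≤ 0 := le_of_not_gt hx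
    have : Real.exp (g x) ≤ 1 := Real.exp_le_one_iff.mpr hgx
    nlinarith [hv_nonneg x]
  have hu_compl : ∫ x in Aᶜ, u x = -T := by
    have hsp := integral_add_compl hA hu_int
    rw [hu_zero] at hsp
    rw [hT_def]; linarith
  have hT_nonneg : 0 ≤ T := setIntegral_nonneg hA hu_nonneg_A
  have habs : ∫ x, |u x| = 2 * T := by
    have hsp := integral_add_compl hA (hu_int.abs)
    have h1 : ∫ x in A, |u x| = T := by
      rw [hT_def]
      exact setIntegral_congr_fun hA (fun x hx => abs_of_nonneg (hu_nonneg_A x hx))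
    have h2 : ∫ x in Aᶜ, |u x| = T := by
      have : ∫ x in Aᶜ, |u x| = ∫ x in Aᶜ, -u x :=
        setIntegral_congr_fun hA.compl (fun x hx => abs_of_nonpos (hu_nonpos_Ac x hx))
      rw [this, integral_neg, hu_compl, neg_neg]
    rw [h1, h2] at hsp
    linarith
  have hTV : TV v p' = T := by
    rw [TV]
    have habs' : ∀ x, |v x - p' x| = |u x| := by
      intro x
      rw [hu_def]
      simp only
      rw [abs_sub_comm]
    simp only [habs']
    rw [habs]
    ring
  -- bound 1 : T ≤ (1 - exp(-m)) * P
  set P : ℝ := ∫ x in A, p' x with hP_def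
  set Q : ℝ := ∫ x in Aᶜ, v x with hQ_def
  have hPQ : P + Q = 1 + T := by
    have hsv := integral_add_compl hA hv_int
    rw [hv_one] at hsv
    have hPa : P = (∫ x in A, v x) + T := by
      rw [hP_def, hT_def]
      rw [← integral_add hv_int.integrableOn hu_int.integrableOn]
      refine setIntegral_congr_fun hA (fun x hx => ?_)
      rw [hu_def]; simp only; ring
    rw [hPa, hQ_def]; linarith
  have hT_le_aP : T ≤ (1 - Real.exp (-m)) * P := by
    have hpt : ∀ x ∈ A, u x ≤ (1 - Real.exp (-m)) * p' x := by
      intro x hx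
      have h1 : Real.exp (-m) ≤ Real.exp (-(g x)) :=
        Real.exp_le_exp.2 (neg_le_neg (hg_le x))
      have heq : u x = (v x * Real.exp (g x)) * (1 - Real.exp (-(g x))) := by
        rw [hu_eq x, Real.exp_neg]
        field_simp
      rw [heq, hp'_eq x]
      have hvE : 0 ≤ v x * Real.exp (g x) := mul_nonneg (hv_nonneg x) (Real.exp_pos _).le
      nlinarith
    have := setIntegral_mono_on hu_int.integrableOn
      ((hp'_int.const_mul (1 - Real.exp (-m))).integrableOn) hA hpt
    rw [integral_const_mul] at this
    exact this
  have hT_le_bQ : T ≤ (1 - Real.exp (-m')) * Q := by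
    have hpt : ∀ x ∈ Aᶜ, -u x ≤ (1 - Real.exp (-m')) * v x := by
      intro x _
      have h1 : Real.exp (-m') ≤ Real.exp (g x) := Real.exp_le_exp.2 (hg_ge x)
      have heq : -u x = v x * (1 - Real.exp (g x)) := by rw [hu_eq x]; ring
      rw [heq]
      nlinarith [hv_nonneg x]
    have h2 : ∫ x in Aᶜ, -u x ≤ ∫ x in Aᶜ, (1 - Real.exp (-m')) * v x :=
      setIntegral_mono_on hu_int.neg.integrableOn
        ((hv_int.const_mul (1 - Real.exp (-m'))).integrableOn) hA.compl hpt
    rw [integral_const_mul, integral_neg, hu_compl, neg_neg] at h2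
    exact h2
  -- goal 1
  have goal1 : T ≤ β / 2 := by
    have ha0 : 0 ≤ 1 - Real.exp (-m) := by
      have : Real.exp (-m) ≤ 1 := Real.exp_le_one_iff.mpr (by linarith)
      linarith
    have hb0 : 0 ≤ 1 - Real.exp (-m') := by
      have : Real.exp (-m') ≤ 1 := Real.exp_le_one_iff.mpr (by linarith)
      linarith
    have hP0 : 0 ≤ P := setIntegral_nonneg hA (fun x _ => hp'_nonneg x)
    have hQ0 : 0 ≤ Q := setIntegral_nonneg hA.compl (fun x _ => hv_nonneg x)
    have hprod := prod_one_sub_exp_le m m' hm hm'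
    have hmm' : m + m' = 2 * β := by rw [hm_def, hm'_def]; ring
    rw [hmm'] at hprod
    have hxy : Real.exp (-m) * Real.exp (-m') = Real.exp (-(2*β)) := by
      rw [← Real.exp_add]; congr 1; rw [hm_def, hm'_def]; ring
    by_cases hβpos : 0 < β
    · have hfac : 0 < 1 - Real.exp (-(2*β)) := by
        have : Real.exp (-(2*β)) < 1 := Real.exp_lt_one_iff.mpr (by linarith)
        linarith
      -- (a+b-ab) T ≤ ab ≤ (1-exp(-2β)) β/2 = (a+b-ab) β/2
      have hbT := mul_le_mul_of_nonneg_left hT_le_aP hb0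
      have haT := mul_le_mul_of_nonneg_left hT_le_bQ ha0
      have hprodPQ : (1 - Real.exp (-m)) * (1 - Real.exp (-m')) * (P + Q) =
          (1 - Real.exp (-m)) * (1 - Real.exp (-m')) * (1 + T) := by rw [hPQ]
      have key : (1 - Real.exp (-(2*β))) * T ≤
          (1 - Real.exp (-m)) * (1 - Real.exp (-m')) := by
        nlinarith [hbT, haT, hprodPQ, hxy]
      have key2 : (1 - Real.exp (-(2*β))) * T ≤ (1 - Real.exp (-(2*β))) * (β / 2) := by
        nlinarith [key, hprod]
      exact le_of_mul_le_mul_left key2 hfac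
    · have hβ0 : β = 0 := le_antisymm (not_lt.mp hβpos) hβ
      have hm0 : m = 0 := by
        have : m + m' = 0 := by rw [hmm', hβ0]; ring
        linarith
      have : T ≤ 0 := by
        have := hT_le_aP
        rw [hm0] at this
        simpa using this
      linarith
  -- integrabilities
  have hvh_int : Integrable (fun x => v x * h x) := by
    refine Integrable.mono (hv_int.const_mul β) (hv_int.1.mul hh_meas.aestronglyMeasurable)
      (Filter.Eventually.of_forall fun x => ?_)
    rw [Real.norm_eq_abs, Real.norm_eq_abs, abs_mul, abs_of_nonneg (hv_nonneg x)]
    calc v x * |h x| ≤ v x * β := mul_le_mul_of_nonneg_left (hh_bdd x) (hv_nonneg x)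
      _ = |β * v x| := by
          rw [abs_mul, abs_of_nonneg hβ, abs_of_nonneg (hv_nonneg x)]; ring
  have hvg_int : Integrable (fun x => v x * g x) := by
    have heq : (fun x => v x * g x) = fun x => v x * h x - c * v x := by
      funext x; rw [hg_def]; simp only; ring
    rw [heq]; exact hvh_int.sub (hv_int.const_mul c)
  have hc_abs : |c| ≤ β := abs_le.mpr ⟨hc_ge, hc_le⟩
  have hg_abs : ∀ x, |g x| ≤ 2 * β := by
    intro x
    rw [hg_def]; simp only
    calc |h x - c| = |h x + -c| := by rw [sub_eq_add_neg]
      _ ≤ |h x| + |(-c)| := abs_add_le _ _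
      _ = |h x| + |c| := by rw [abs_neg]
      _ ≤ 2 * β := by linarith [hh_bdd x]
  have hp'g_int : Integrable (fun x => p' x * g x) := by
    refine Integrable.mono (hp'_int.const_mul (2 * β))
      (hp'_int.1.mul hg_meas.aestronglyMeasurable)
      (Filter.Eventually.of_forall fun x => ?_)
    rw [Real.norm_eq_abs, Real.norm_eq_abs, abs_mul, abs_of_nonneg (hp'_nonneg x)]
    calc p' x * |g x| ≤ p' x * (2 * β) := mul_le_mul_of_nonneg_left (hg_abs x) (hp'_nonneg x)
      _ = |2 * β * p' x| := by
          rw [abs_mul, abs_of_nonneg (by linarith : (0:ℝ) ≤ 2 * β),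
            abs_of_nonneg (hp'_nonneg x)]; ring
  have huh_int : Integrable (fun x => u x * h x) := by
    refine Integrable.mono (hu_int.abs.const_mul β)
      (hu_int.1.mul hh_meas.aestronglyMeasurable)
      (Filter.Eventually.of_forall fun x => ?_)
    rw [Real.norm_eq_abs, Real.norm_eq_abs, abs_mul,
      abs_of_nonneg (mul_nonneg hβ (abs_nonneg (u x)))]
    nlinarith [mul_le_mul_of_nonneg_left (hh_bdd x) (abs_nonneg (u x))]
  -- KL values
  set t : ℝ := ∫ x, v x * h x with ht_def
  have hKLpv : KL p' v = ∫ x, p' x * g x := by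
    rw [KL]
    refine integral_congr_ae ?_
    filter_upwards [hv_pos] with x hx
    have h1 : p' x / v x = Real.exp (g x) := by
      rw [hp'_eq x, mul_comm, mul_div_assoc, div_self hx.ne', mul_one]
    rw [h1, Real.log_exp]
  have hKLvp : KL v p' = c - t := by
    have h0 : KL v p' = ∫ x, v x * (c - h x) := by
      rw [KL]
      refine integral_congr_ae ?_
      filter_upwards [hv_pos] with x hx
      have h1 : v x / p' x = Real.exp (-(g x)) := by
        rw [hp'_eq x, Real.exp_neg, div_mul_eq_div_div, div_self hx.ne', one_div]
      rw [h1, Real.log_exp, hg_def]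
      simp only
      ring
    rw [h0]
    have heq : (fun x => v x * (c - h x)) = fun x => c * v x - v x * h x := by
      funext x; ring
    rw [heq, integral_sub (hv_int.const_mul c) hvh_int, integral_const_mul, hv_one,
      ← ht_def]
    ring
  -- Jensen : exp t ≤ Z, hence t ≤ c
  have hjen : Real.exp t ≤ Z := by
    have hpt : ∀ x, v x * (Real.exp t * (1 + (h x - t))) ≤ w x := by
      intro x
      have h1 : (h x - t) + 1 ≤ Real.exp (h x - t) := Real.add_one_le_exp _
      have h2 : Real.exp t * Real.exp (h x - t) = Real.exp (h x) := by
        rw [← Real.exp_add]; congr 1; ring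
      have h3 : Real.exp t * (1 + (h x - t)) ≤ Real.exp (h x) := by
        nlinarith [Real.exp_pos t]
      calc v x * (Real.exp t * (1 + (h x - t))) ≤ v x * Real.exp (h x) :=
            mul_le_mul_of_nonneg_left h3 (hv_nonneg x)
        _ = w x := by rw [hw_def]; simp only; ring
    have hfeq : (fun x => v x * (Real.exp t * (1 + (h x - t)))) =
        fun x => (Real.exp t * (1 - t)) * v x + Real.exp t * (v x * h x) := by
      funext x; ring
    have hf_int : Integrable (fun x => v x * (Real.exp t * (1 + (h x - t)))) := by
      rw [hfeq]; exact (hv_int.const_mul _).add (hvh_int.const_mul _)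
    have h4 := integral_mono hf_int hw_int hpt
    rw [hfeq, integral_add (hv_int.const_mul _) (hvh_int.const_mul _),
      integral_const_mul, integral_const_mul, hv_one, ← ht_def] at h4
    calc Real.exp t = Real.exp t * (1 - t) * 1 + Real.exp t * t := by ring
      _ ≤ Z := h4
  have ht_le_c : t ≤ c := by
    rw [hc_def]
    exact (Real.le_log_iff_exp_le hZ_pos).mpr hjen
  have goal2 : 0 ≤ KL v p' := by rw [hKLvp]; linarith
  -- sum of KLs
  have hsum : KL p' v + KL v p' = ∫ x, u x * h x := by
    rw [hKLpv, hKLvp]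
    have h1 : (fun x => u x * h x) = fun x => (p' x * g x - v x * g x) + c * u x := by
      funext x; rw [hu_def, hg_def]; simp only; ring
    have hint1 : Integrable (fun x => p' x * g x - v x * g x) := hp'g_int.sub hvg_int
    rw [h1, integral_add hint1 (hu_int.const_mul c),
      integral_sub hp'g_int hvg_int, integral_const_mul, hu_zero, mul_zero, add_zero]
    have h2 : ∫ x, v x * g x = t - c := by
      have heq : (fun x => v x * g x) = fun x => v x * h x - c * v x := by
        funext x; rw [hg_def]; simp only; ring
      rw [heq, integral_sub hvh_int (hv_int.const_mul c), integral_const_mul, hv_one,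
        ← ht_def]
      ring
    rw [h2]
    ring
  have hsum_le : KL p' v + KL v p' ≤ 2 * β * T := by
    rw [hsum]
    have h1 : ∫ x, u x * h x ≤ ∫ x, β * |u x| := by
      refine integral_mono huh_int (hu_int.abs.const_mul β) fun x => ?_
      calc u x * h x ≤ |u x * h x| := le_abs_self _
        _ = |u x| * |h x| := abs_mul _ _
        _ ≤ |u x| * β := mul_le_mul_of_nonneg_left (hh_bdd x) (abs_nonneg _)
        _ = β * |u x| := mul_comm _ _
    rw [integral_const_mul, habs] at h1
    linarith
  refine ⟨?_, ?_, ?_, ?_⟩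
  · rw [hTV]; exact goal1
  · linarith
  · rw [hTV]
    have heq : 2 * α * L * T = 2 * β * T := by rw [hβ_def]; ring
    linarith [hsum_le, heq.le, heq.ge]
  · rw [hTV]
    have h1 : 2 * β * T ≤ 2 * β * (β / 2) :=
      mul_le_mul_of_nonneg_left goal1 (by linarith)
    have h2 : 2 * α * L * T = 2 * β * T := by rw [hβ_def]; ring
    have h3 : α ^ 2 * L ^ 2 = 2 * β * (β / 2) := by rw [hβ_def]; ring
    linarith
end
end
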